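/- Let X and Y be pointed sets with X finite, and let R be a commutative ring. Let Ω be the category of sets ⟨s⟩ = {1,…,s}, s > 0, with surjections, and let M(X), M(Y) : Ωᵒᵖ → Mod R be the functors sending ⟨s⟩ to the free reduced R-module on X^∧s and Y^∧s respectively, with surjections acting by coordinate precomposition. Define ε : (free reduced R-module on the pointed set of basepoint-preserving functions X → Y) → Hom(M(X), M(Y)) by ε([v])_s([x₁∧⋯∧x_s]) = [v(x₁)∧⋯∧v(x_s)]. Then ε is an isomorphism of R-modules. -/

import Mathlib

/-!  Ω is the category of nonempty finite sets ⟨s⟩ = {1,…,s} (encoded here as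
`Fin (s+1)`, s : ℕ, so that every object is nonempty) with surjections as
morphisms.  An `OmegaFunctor R` is a functor Ωᵒᵖ → Mod R. -/

structure OmegaFunctor (R : Type) [CommRing R] where
  obj : ℕ → Type
  [acg : ∀ s, AddCommGroup (obj s)]
  [mod : ∀ s, Module R (obj s)]
  map : ∀ {s t : ℕ} (h : Fin (t + 1) → Fin (s + 1)),
    Function.Surjective h → (obj s →ₗ[R] obj t)
  map_id : ∀ s : ℕ, map (s := s) id Function.surjective_id = LinearMap.id
  map_comp : ∀ {s t u : ℕ} (h : Fin (t + 1) → Fin (s + 1)) (hh : Function.Surjective h)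
    (k : Fin (u + 1) → Fin (t + 1)) (hk : Function.Surjective k),
    map (h ∘ k) (hh.comp hk) = (map k hk).comp (map h hh)

attribute [instance] OmegaFunctor.acg OmegaFunctor.mod

/-- Natural transformations F → G, as a submodule of the product of the Hom modules. -/
def OmegaFunctor.Nat {R : Type} [CommRing R] (F G : OmegaFunctor R) :
    Submodule R (∀ s : ℕ, F.obj s →ₗ[R] G.obj s) where
  carrier := {T | ∀ {s t : ℕ} (h : Fin (t + 1) → Fin (s + 1)) (hs : Function.Surjective h),
    (G.map h hs).comp (T s) = (T t).comp (F.map h hs)}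
  add_mem' := by
    intro a b ha hb s t h hs
    simp only [Pi.add_apply, LinearMap.comp_add, LinearMap.add_comp, ha h hs, hb h hs]
  zero_mem' := by
    intro s t h hs
    simp
  smul_mem' := by
    intro c a ha s t h hs
    simp only [Pi.smul_apply, LinearMap.comp_smul, LinearMap.smul_comp, ha h hs]

/-- The smash-power functor `M(S)` of a pointed set `(S, pt)`:
`M(S)(⟨s⟩)` is the free reduced `R`-module on the smash power `S^∧s`, whose basis is
the set of `s`-tuples of non-basepoint elements of `S`; a surjection `h : ⟨t⟩ → ⟨s⟩`
acts by precomposition on coordinates. -/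
noncomputable def Mfun (R : Type) [CommRing R] (S : Type) (pt : S) : OmegaFunctor R where
  obj s := (Fin (s + 1) → {x : S // x ≠ pt}) →₀ R
  map h _ := Finsupp.lmapDomain R R (fun x => x ∘ h)
  map_id s := by
    exact Finsupp.lmapDomain_id R R
  map_comp h hh k hk := by
    exact Finsupp.lmapDomain_comp R R (fun x => x ∘ h) (fun x => x ∘ k)

open scoped Classical

/-- Non-basepoint basepoint-preserving functions `(X,px) → (Y,py)`: the basis of
the free reduced `R`-module on the pointed set of pointed functions `X → Y`
(whose basepoint is the constant-basepoint function). -/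
def PFunB (X Y : Type) (px : X) (py : Y) : Type :=
  {v : X → Y // v px = py ∧ ∃ x, v x ≠ py}

set_option linter.unusedSectionVars false


open scoped Classical
open Finsupp

variable {R : Type} [CommRing R] {X Y : Type} {px : X} {py : Y}

noncomputable def epsComp (py : Y) (v : X → Y) (s : ℕ) :
    ((Fin (s + 1) → {a : X // a ≠ px}) →₀ R) →ₗ[R] ((Fin (s + 1) → {y : Y // y ≠ py}) →₀ R) :=
  Finsupp.lift _ R _ (fun x =>
    if h : ∀ t, v (x t).1 ≠ py then Finsupp.single (fun t => ⟨v (x t).1, h t⟩) (1 : R) else 0)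

lemma epsComp_single (v : X → Y) (s : ℕ) (x : Fin (s+1) → {a : X // a ≠ px}) (r : R) :
    epsComp py v s (Finsupp.single x r) =
      r • (if h : ∀ t, v (x t).1 ≠ py then
        Finsupp.single (fun t => (⟨v (x t).1, h t⟩ : {y : Y // y ≠ py})) (1:R) else 0) := by
  simp [epsComp, Finsupp.lift_apply, Finsupp.sum_single_index]

lemma epsComp_natural (v : X → Y) {s t : ℕ} (h : Fin (t+1) → Fin (s+1))
    (hs : Function.Surjective h) :
    (Finsupp.lmapDomain R R (fun x : Fin (s+1) → {y : Y // y ≠ py} => x ∘ h)).comp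
        (epsComp (px := px) py v s)
      = (epsComp py v t).comp
        (Finsupp.lmapDomain R R (fun x : Fin (s+1) → {a : X // a ≠ px} => x ∘ h)) := by
  apply Finsupp.lhom_ext
  intro x r
  simp only [LinearMap.comp_apply, Finsupp.lmapDomain_apply, Finsupp.mapDomain_single,
    epsComp_single]
  by_cases hc : ∀ u, v (x u).1 ≠ py
  · have hc' : ∀ u : Fin (t+1), v ((x ∘ h) u).1 ≠ py := fun u => hc (h u)
    rw [dif_pos hc, dif_pos hc', Finsupp.mapDomain_smul, Finsupp.mapDomain_single]
    rfl
  · rw [dif_neg hc, dif_neg]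
    · simp
    · intro hc'
      apply hc
      intro u
      obtain ⟨w, rfl⟩ := hs u
      exact hc' w

-- continuing: assumes a.lean content prepended
noncomputable def epsT (px : X) (py : Y) (v : PFunB X Y px py) :
    ((Mfun R X px).Nat (Mfun R Y py)) :=
  ⟨fun s => epsComp py v.1 s, by
    intro s t h hs
    exact epsComp_natural v.1 h hs⟩

noncomputable def epsilonMap (R : Type) [CommRing R] (X Y : Type) (px : X) (py : Y) :
    ((PFunB X Y px py) →₀ R) →ₗ[R] ((Mfun R X px).Nat (Mfun R Y py)) :=
  Finsupp.lift _ R _ (epsT px py)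

lemma epsilonMap_single (v : PFunB X Y px py) :
    epsilonMap R X Y px py (Finsupp.single v 1) = epsT px py v := by
  simp [epsilonMap, Finsupp.lift_apply, Finsupp.sum_single_index]

noncomputable def tupleOf (A : Finset {a : X // a ≠ px}) (hA : A.Nonempty) :
    Fin (A.card - 1 + 1) → {a : X // a ≠ px} :=
  fun i => (A.equivFin.symm
    (Fin.cast (Nat.succ_pred_eq_of_pos (Finset.card_pos.mpr hA)) i)).1

lemma tupleOf_mem (A : Finset {a : X // a ≠ px}) (hA : A.Nonempty) (i) :
    tupleOf A hA i ∈ A :=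
  (A.equivFin.symm _).2

lemma tupleOf_inj (A : Finset {a : X // a ≠ px}) (hA : A.Nonempty) :
    Function.Injective (tupleOf A hA) := by
  intro i j hij
  have := A.equivFin.symm.injective (Subtype.ext hij)
  simpa [Fin.ext_iff] using congrArg Fin.val this

lemma tupleOf_surj (A : Finset {a : X // a ≠ px}) (hA : A.Nonempty) (a : {a : X // a ≠ px})
    (ha : a ∈ A) : ∃ i, tupleOf A hA i = a := by
  refine ⟨Fin.cast (Nat.succ_pred_eq_of_pos (Finset.card_pos.mpr hA)).symm
    (A.equivFin ⟨a, ha⟩), ?_⟩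
  simp [tupleOf]

variable [Fintype {a : X // a ≠ px}]

noncomputable def suppF (v : PFunB X Y px py) : Finset {a : X // a ≠ px} :=
  Finset.univ.filter (fun a => v.1 a.1 ≠ py)

lemma mem_suppF {v : PFunB X Y px py} {a : {a : X // a ≠ px}} :
    a ∈ suppF (px := px) (py := py) v ↔ v.1 a.1 ≠ py := by
  simp [suppF]

lemma suppF_nonempty (v : PFunB X Y px py) : (suppF (px := px) (py := py) v).Nonempty := by
  obtain ⟨x, hx⟩ := v.2.2
  have hxp : x ≠ px := by rintro rfl; exact hx v.2.1
  exact ⟨⟨x, hxp⟩, mem_suppF.mpr hx⟩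

noncomputable def extMap (A : Finset {a : X // a ≠ px}) (hA : A.Nonempty)
    (y : Fin (A.card - 1 + 1) → {b : Y // b ≠ py}) : PFunB X Y px py :=
  ⟨fun x => if h : ∃ i, (tupleOf A hA i).1 = x then (y (Classical.choose h)).1 else py,
   dif_neg (by rintro ⟨i, hi⟩; exact (tupleOf A hA i).2 hi),
   by
    refine ⟨(tupleOf A hA 0).1, ?_⟩
    show (if h : ∃ i, (tupleOf A hA i).1 = (tupleOf A hA 0).1 then
      (y (Classical.choose h)).1 else py) ≠ py
    rw [dif_pos (⟨0, rfl⟩ : ∃ i, (tupleOf A hA i).1 = (tupleOf A hA 0).1)]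
    exact (y _).2⟩

lemma extMap_tuple (A : Finset {a : X // a ≠ px}) (hA : A.Nonempty)
    (y : Fin (A.card - 1 + 1) → {b : Y // b ≠ py}) (i) :
    (extMap A hA y).1 (tupleOf A hA i).1 = (y i).1 := by
  have hex : ∃ j, (tupleOf A hA j).1 = (tupleOf A hA i).1 := ⟨i, rfl⟩
  show (if h : ∃ j, (tupleOf A hA j).1 = (tupleOf A hA i).1 then
      (y (Classical.choose h)).1 else py) = (y i).1
  rw [dif_pos hex]
  have : Classical.choose hex = i := tupleOf_inj A hA (Subtype.ext (Classical.choose_spec hex))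
  rw [this]

lemma suppF_extMap (A : Finset {a : X // a ≠ px}) (hA : A.Nonempty)
    (y : Fin (A.card - 1 + 1) → {b : Y // b ≠ py}) :
    suppF (px := px) (py := py) (extMap A hA y) = A := by
  ext a
  rw [mem_suppF]
  constructor
  · intro hne
    by_contra hmem
    apply hne
    exact dif_neg (by rintro ⟨i, hi⟩; exact hmem (Subtype.ext hi ▸ tupleOf_mem A hA i))
  · intro ha
    obtain ⟨i, rfl⟩ := tupleOf_surj A hA a ha
    rw [extMap_tuple]
    exact (y i).2

noncomputable def natEval (T : ((Mfun R X px).Nat (Mfun R Y py))) (s : ℕ) :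
    ((Fin (s+1) → {a : X // a ≠ px}) →₀ R) →ₗ[R] ((Fin (s+1) → {b : Y // b ≠ py}) →₀ R) :=
  T.1 s

lemma natEval_epsT (w : PFunB X Y px py) (s : ℕ) :
    natEval (R := R) (epsT px py w) s = epsComp py w.1 s := rfl

lemma epsT_eval (w : PFunB X Y px py) {s : ℕ} (x : Fin (s+1) → {a : X // a ≠ px}) :
    natEval (R := R) (epsT px py w) s (Finsupp.single x 1)
      = if h : ∀ t, w.1 (x t).1 ≠ py then
          Finsupp.single (fun t => (⟨w.1 (x t).1, h t⟩ : {b : Y // b ≠ py})) (1:R) else 0 := by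
  rw [natEval_epsT, epsComp_single, one_smul]

lemma epsilonMap_eval (m : (PFunB X Y px py) →₀ R) (s : ℕ)
    (ξ : (Fin (s+1) → {a : X // a ≠ px}) →₀ R) :
    natEval (epsilonMap R X Y px py m) s ξ
      = m.sum fun v r => r • (natEval (R := R) (epsT px py v) s ξ) := by
  have h1 : epsilonMap R X Y px py m = m.sum fun v r => r • epsT px py v := by
    simp [epsilonMap, Finsupp.lift_apply]
  have h2 : ∀ T : ((Mfun R X px).Nat (Mfun R Y py)),
      natEval T s ξ = ((LinearMap.applyₗ ξ).comp ((LinearMap.proj s).comp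
        (Submodule.subtype _))) T := fun T => rfl
  rw [h2, h1, map_finsuppSum]
  refine Finsupp.sum_congr (fun v _ => ?_)
  rw [map_smul]
  rfl

lemma epsilonMap_eval' (m : (PFunB X Y px py) →₀ R) {s : ℕ}
    (x : Fin (s+1) → {a : X // a ≠ px}) (uu : Fin (s+1) → {b : Y // b ≠ py}) :
    natEval (epsilonMap R X Y px py m) s (Finsupp.single x 1) uu
      = ∑ w ∈ m.support, m w *
          ((if h : ∀ t, w.1 (x t).1 ≠ py then
            Finsupp.single (fun t => (⟨w.1 (x t).1, h t⟩ : {b : Y // b ≠ py})) (1:R) else 0) uu) := by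
  rw [epsilonMap_eval, Finsupp.sum, Finsupp.finset_sum_apply]
  refine Finset.sum_congr rfl (fun w _ => ?_)
  rw [Finsupp.smul_apply, epsT_eval, smul_eq_mul]

lemma cond_iff (v : PFunB X Y px py) (A : Finset {a : X // a ≠ px}) (hA : A.Nonempty) :
    (∀ t, v.1 (tupleOf A hA t).1 ≠ py) ↔ A ⊆ suppF (px := px) (py := py) v := by
  constructor
  · intro h a ha
    obtain ⟨i, rfl⟩ := tupleOf_surj A hA a ha
    exact mem_suppF.mpr (h i)
  · intro h t
    exact mem_suppF.mp (h (tupleOf_mem A hA t))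

lemma inj_core (m : (PFunB X Y px py) →₀ R) (hm : epsilonMap R X Y px py m = 0)
    (v : PFunB X Y px py)
    (IH : ∀ w, suppF (px := px) (py := py) v ⊂ suppF (px := px) (py := py) w → m w = 0) :
    m v = 0 := by
  set A := suppF (px := px) (py := py) v with hAdef
  have hA : A.Nonempty := suppF_nonempty v
  have hcond : ∀ t, v.1 (tupleOf A hA t).1 ≠ py := fun t =>
    mem_suppF.mp (tupleOf_mem A hA t)
  set u : Fin (A.card - 1 + 1) → {b : Y // b ≠ py} :=
    fun t => ⟨v.1 (tupleOf A hA t).1, hcond t⟩ with hu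
  have h0 : ∑ w ∈ m.support, m w *
      ((if h : ∀ t, w.1 (tupleOf A hA t).1 ≠ py then
        Finsupp.single (fun t => (⟨w.1 (tupleOf A hA t).1, h t⟩ : {b : Y // b ≠ py})) (1:R)
        else 0) u) = 0 := by
    rw [← epsilonMap_eval' m (tupleOf A hA) u, hm]
    rfl
  rw [Finset.sum_eq_single v] at h0
  · rw [dif_pos hcond] at h0
    have he : (fun t => (⟨v.1 (tupleOf A hA t).1, hcond t⟩ : {b : Y // b ≠ py})) = u := rfl
    rw [he, Finsupp.single_eq_same, mul_one] at h0
    exact h0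
  · intro w _ hwv
    by_cases hcw : ∀ t, w.1 (tupleOf A hA t).1 ≠ py
    · rw [dif_pos hcw]
      by_cases heq : (fun t => (⟨w.1 (tupleOf A hA t).1, hcw t⟩ : {b : Y // b ≠ py})) = u
      · have hsub : A ⊆ suppF (px := px) (py := py) w := (cond_iff w A hA).mp hcw
        rcases eq_or_ne (suppF (px := px) (py := py) w) A with hAe | hAne
        · exfalso; apply hwv
          apply Subtype.ext; funext xx
          by_cases hxp : xx = px
          · rw [hxp, w.2.1, v.2.1]
          · by_cases hxA : (⟨xx, hxp⟩ : {a : X // a ≠ px}) ∈ A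
            · obtain ⟨i, hi⟩ := tupleOf_surj A hA ⟨xx, hxp⟩ hxA
              have hval : w.1 (tupleOf A hA i).1 = v.1 (tupleOf A hA i).1 :=
                congrArg Subtype.val (congrFun heq i)
              rw [hi] at hval; exact hval
            · have h1 : w.1 xx = py := by
                by_contra hne; exact hxA (hAe ▸ mem_suppF.mpr hne)
              have h2 : v.1 xx = py := by
                by_contra hne
                exact hxA (mem_suppF.mpr hne)
              rw [h1, h2]
        · have hmw : m w = 0 :=
            IH w (Finset.ssubset_iff_subset_ne.mpr ⟨hsub, fun h => hAne h.symm⟩)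
          rw [hmw, zero_mul]
      · rw [Finsupp.single_apply, if_neg heq, mul_zero]
    · rw [dif_neg hcw, Finsupp.coe_zero, Pi.zero_apply, mul_zero]
  · intro hv
    rw [Finsupp.notMem_support_iff.mp hv, zero_mul]

lemma nat_determined (T : ((Mfun R X px).Nat (Mfun R Y py)))
    (h0 : ∀ (A : Finset {a : X // a ≠ px}) (hA : A.Nonempty),
      natEval (R := R) T (A.card - 1) (Finsupp.single (tupleOf A hA) 1) = 0) :
    T = 0 := by
  have key : ∀ (s : ℕ) (x : Fin (s+1) → {a : X // a ≠ px}),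
      natEval (R := R) T s (Finsupp.single x 1) = 0 := by
    intro s x
    set A : Finset {a : X // a ≠ px} := Finset.image x Finset.univ with hAdef
    have hA : A.Nonempty := ⟨x 0, Finset.mem_image_of_mem x (Finset.mem_univ 0)⟩
    have hmem : ∀ t, x t ∈ A := fun t => Finset.mem_image_of_mem x (Finset.mem_univ t)
    choose g hg using fun t => tupleOf_surj A hA (x t) (hmem t)
    have hsurj : Function.Surjective g := by
      intro i
      have hmemi : tupleOf A hA i ∈ A := tupleOf_mem A hA i
      obtain ⟨t, _, ht⟩ := Finset.mem_image.mp hmemi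
      exact ⟨t, tupleOf_inj A hA ((hg t).trans ht)⟩
    have hnat := T.2 g hsurj
    have hmapX : ((Mfun R X px).map g hsurj) (Finsupp.single (tupleOf A hA) 1)
        = (Finsupp.single x 1 : (Fin (s+1) → {a : X // a ≠ px}) →₀ R) := by
      show Finsupp.lmapDomain R R (fun xx => xx ∘ g) (Finsupp.single (tupleOf A hA) 1)
        = Finsupp.single x 1
      rw [Finsupp.lmapDomain_apply, Finsupp.mapDomain_single]
      congr 1
      exact funext hg
    calc T.1 s (Finsupp.single x 1)
        = T.1 s (((Mfun R X px).map g hsurj) (Finsupp.single (tupleOf A hA) 1)) := by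
          rw [hmapX]
      _ = ((Mfun R Y py).map g hsurj) (T.1 (A.card - 1) (Finsupp.single (tupleOf A hA) 1)) :=
          (LinearMap.congr_fun hnat _).symm
      _ = ((Mfun R Y py).map g hsurj) 0 := by
          rw [show T.1 (A.card - 1) (Finsupp.single (tupleOf A hA) 1)
            = (0 : (Fin (A.card - 1 + 1) → {b : Y // b ≠ py}) →₀ R) from h0 A hA]
          rfl
      _ = 0 := map_zero _
  apply Subtype.ext
  funext s
  show natEval (R := R) T s = (0 : _ →ₗ[R] _)
  apply Finsupp.lhom_ext
  intro x r
  have : Finsupp.single x r = r • Finsupp.single x (1 : R) := by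
    rw [Finsupp.smul_single, smul_eq_mul, mul_one]
  rw [this, map_smul, key, smul_zero]
  rfl

lemma epsilonMap_injective : Function.Injective (epsilonMap R X Y px py) := by
  rw [injective_iff_map_eq_zero]
  intro m hm0
  have H : ∀ (k : ℕ) (v : PFunB X Y px py),
      Fintype.card {a : X // a ≠ px} - (suppF (px := px) (py := py) v).card ≤ k → m v = 0 := by
    intro k
    induction k with
    | zero =>
      intro v hv
      apply inj_core m hm0 v
      intro w hw
      exfalso
      have h1 := Finset.card_lt_card hw
      have h2 : (suppF (px := px) (py := py) w).card ≤ Fintype.card {a : X // a ≠ px} :=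
        Finset.card_le_univ _
      omega
    | succ k ih =>
      intro v hv
      apply inj_core m hm0 v
      intro w hw
      apply ih
      have h1 := Finset.card_lt_card hw
      omega
  ext v
  rw [H (Fintype.card {a : X // a ≠ px}) v (by omega)]
  rfl

noncomputable def natEvalL (s : ℕ) (ξ : (Fin (s+1) → {a : X // a ≠ px}) →₀ R) :
    ((Mfun R X px).Nat (Mfun R Y py)) →ₗ[R] ((Fin (s+1) → {b : Y // b ≠ py}) →₀ R) :=
  (LinearMap.applyₗ ξ).comp ((LinearMap.proj s).comp (Submodule.subtype _))

lemma natEval_eq (T : ((Mfun R X px).Nat (Mfun R Y py))) (s : ℕ)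
    (ξ : (Fin (s+1) → {a : X // a ≠ px}) →₀ R) :
    natEval T s ξ = natEvalL s ξ T := rfl

lemma eps_mapDomain_expand (A : Finset {a : X // a ≠ px}) (hA : A.Nonempty)
    (z : (Fin (A.card - 1 + 1) → {b : Y // b ≠ py}) →₀ R)
    (A₀ : Finset {a : X // a ≠ px}) (hA₀ : A₀.Nonempty) :
    natEval (epsilonMap R X Y px py (Finsupp.mapDomain (extMap A hA) z)) (A₀.card - 1)
        (Finsupp.single (tupleOf A₀ hA₀) 1)
      = z.sum fun y r => r •
          (natEval (R := R) (epsT px py (extMap A hA y)) (A₀.card - 1)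
            (Finsupp.single (tupleOf A₀ hA₀) 1)) := by
  rw [epsilonMap_eval]
  apply Finsupp.sum_mapDomain_index
  · intro y; rw [zero_smul]
  · intro y r₁ r₂; rw [add_smul]

lemma eps_mapDomain_eval_ne (A : Finset {a : X // a ≠ px}) (hA : A.Nonempty)
    (z : (Fin (A.card - 1 + 1) → {b : Y // b ≠ py}) →₀ R)
    (A₀ : Finset {a : X // a ≠ px}) (hA₀ : A₀.Nonempty) (hne : ¬ A₀ ⊆ A) :
    natEval (epsilonMap R X Y px py (Finsupp.mapDomain (extMap A hA) z)) (A₀.card - 1)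
        (Finsupp.single (tupleOf A₀ hA₀) 1) = 0 := by
  rw [eps_mapDomain_expand]
  have hz : ∀ y ∈ z.support,
      (fun (y : Fin (A.card - 1 + 1) → {b : Y // b ≠ py}) (r : R) => r •
        (natEval (R := R) (epsT px py (extMap A hA y)) (A₀.card - 1)
          (Finsupp.single (tupleOf A₀ hA₀) 1))) y (z y) = 0 := by
    intro y _
    dsimp only
    rw [epsT_eval, dif_neg, smul_zero]
    intro hcw
    exact hne (by rw [← suppF_extMap A hA y]; exact (cond_iff _ A₀ hA₀).mp hcw)
  rw [Finsupp.sum, Finset.sum_congr rfl hz, Finset.sum_const_zero]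

lemma eps_mapDomain_eval_self (A : Finset {a : X // a ≠ px}) (hA : A.Nonempty)
    (z : (Fin (A.card - 1 + 1) → {b : Y // b ≠ py}) →₀ R) :
    natEval (epsilonMap R X Y px py (Finsupp.mapDomain (extMap A hA) z)) (A.card - 1)
        (Finsupp.single (tupleOf A hA) 1) = z := by
  rw [eps_mapDomain_expand]
  have hz : ∀ y ∈ z.support,
      (fun (y : Fin (A.card - 1 + 1) → {b : Y // b ≠ py}) (r : R) => r •
        (natEval (R := R) (epsT px py (extMap A hA y)) (A.card - 1)
          (Finsupp.single (tupleOf A hA) 1))) y (z y) = Finsupp.single y (z y) := by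
    intro y _
    dsimp only
    have hcw : ∀ t, (extMap A hA y).1 (tupleOf A hA t).1 ≠ py := by
      intro t; rw [extMap_tuple]; exact (y t).2
    rw [epsT_eval, dif_pos hcw]
    have htup : (fun t => (⟨(extMap A hA y).1 (tupleOf A hA t).1, hcw t⟩ : {b : Y // b ≠ py}))
        = y := by
      funext t; exact Subtype.ext (extMap_tuple A hA y t)
    rw [htup, Finsupp.smul_single, smul_eq_mul, mul_one]
  rw [Finsupp.sum, Finset.sum_congr rfl hz, ← Finsupp.sum, Finsupp.sum_single]

lemma surj_aux (T : ((Mfun R X px).Nat (Mfun R Y py))) (k : ℕ) :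
    ∃ m : (PFunB X Y px py) →₀ R, ∀ (A : Finset {a : X // a ≠ px}) (hA : A.Nonempty),
      Fintype.card {a : X // a ≠ px} < A.card + k →
      natEval (T - epsilonMap R X Y px py m) (A.card - 1)
        (Finsupp.single (tupleOf A hA) 1) = 0 := by
  induction k with
  | zero =>
    refine ⟨0, fun A hA h => absurd h ?_⟩
    have := Finset.card_le_univ A
    omega
  | succ k ih =>
    obtain ⟨m, hm⟩ := ih
    set N := Fintype.card {a : X // a ≠ px} with hN
    set 𝒜 : Finset (Finset {a : X // a ≠ px}) :=
      Finset.univ.filter (fun A => A.card + k = N ∧ A.Nonempty) with h𝒜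
    set δ : Finset {a : X // a ≠ px} → ((PFunB X Y px py) →₀ R) := fun A =>
      if hA : A.Nonempty then
        Finsupp.mapDomain (extMap A hA)
          (natEval (T - epsilonMap R X Y px py m) (A.card - 1)
            (Finsupp.single (tupleOf A hA) 1))
      else 0 with hδ
    refine ⟨m + ∑ A ∈ 𝒜, δ A, ?_⟩
    intro A₀ hA₀ hcard
    have hsplit : natEval (T - epsilonMap R X Y px py (m + ∑ A ∈ 𝒜, δ A)) (A₀.card - 1)
        (Finsupp.single (tupleOf A₀ hA₀) 1)
        = natEval (T - epsilonMap R X Y px py m) (A₀.card - 1)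
            (Finsupp.single (tupleOf A₀ hA₀) 1)
          - ∑ A ∈ 𝒜, natEval (epsilonMap R X Y px py (δ A)) (A₀.card - 1)
              (Finsupp.single (tupleOf A₀ hA₀) 1) := by
      rw [natEval_eq, map_add (epsilonMap R X Y px py), map_sum (epsilonMap R X Y px py),
        sub_add_eq_sub_sub, map_sub, map_sum]
      exact rfl
    rw [hsplit]
    by_cases hhi : N < A₀.card + k
    · rw [hm A₀ hA₀ hhi]
      rw [Finset.sum_eq_zero, sub_zero]
      intro A hA𝒜
      obtain ⟨hAcard, hAne⟩ := Finset.mem_filter.mp hA𝒜 |>.2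
      have hA : A.Nonempty := hAne
      have hd : δ A = Finsupp.mapDomain (extMap A hA)
          (natEval (T - epsilonMap R X Y px py m) (A.card - 1)
            (Finsupp.single (tupleOf A hA) 1)) := by
        rw [hδ]; exact dif_pos hA
      rw [hd]
      apply eps_mapDomain_eval_ne
      intro hsub
      have := Finset.card_le_card hsub
      omega
    · have hA₀card : A₀.card + k = N := by omega
      have hA₀mem : A₀ ∈ 𝒜 := by
        rw [h𝒜]; exact Finset.mem_filter.mpr ⟨Finset.mem_univ _, hA₀card, hA₀⟩
      rw [Finset.sum_eq_single_of_mem A₀ hA₀mem]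
      · have hd : δ A₀ = Finsupp.mapDomain (extMap A₀ hA₀)
            (natEval (T - epsilonMap R X Y px py m) (A₀.card - 1)
              (Finsupp.single (tupleOf A₀ hA₀) 1)) := by
          rw [hδ]; exact dif_pos hA₀
        rw [hd, eps_mapDomain_eval_self, sub_self]
      · intro A hA𝒜 hAne₀
        obtain ⟨hAcard, hAne⟩ := Finset.mem_filter.mp hA𝒜 |>.2
        have hA : A.Nonempty := hAne
        have hd : δ A = Finsupp.mapDomain (extMap A hA)
            (natEval (T - epsilonMap R X Y px py m) (A.card - 1)
              (Finsupp.single (tupleOf A hA) 1)) := by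
          rw [hδ]; exact dif_pos hA
        rw [hd]
        apply eps_mapDomain_eval_ne
        intro hsub
        exact hAne₀ (Finset.eq_of_subset_of_card_le hsub (by omega)).symm

lemma epsilonMap_surjective : Function.Surjective (epsilonMap R X Y px py) := by
  intro T
  obtain ⟨m, hm⟩ := surj_aux T (Fintype.card {a : X // a ≠ px} + 1)
  refine ⟨m, ?_⟩
  have h0 : T - epsilonMap R X Y px py m = 0 := by
    apply nat_determined
    intro A hA
    apply hm A hA
    have := Finset.card_pos.mpr hA
    omega
  have := sub_eq_zero.mp h0
  exact this.symm


/-- Theorem 0.6 of the paper, key case of fixed bidegree: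
for `X` finite, the map
`ε : R[(Y^X)] → Hom(M(X), M(Y))`, `ε([v])_s([x₁∧⋯∧x_s]) = [v(x₁)∧⋯∧v(x_s)]`,
is an isomorphism of `R`-modules (from the free reduced module on pointed
functions `X → Y` to the module of natural transformations `M(X) → M(Y)`). -/
theorem epsilon_isomorphism (R : Type) [CommRing R]
    (X Y : Type) [Finite X] (px : X) (py : Y) :
    ∃ e : ((PFunB X Y px py) →₀ R) ≃ₗ[R] ((Mfun R X px).Nat (Mfun R Y py)),
      ∀ (v : PFunB X Y px py) (s : ℕ) (x : Fin (s + 1) → {a : X // a ≠ px}),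
        (e (Finsupp.single v 1)).1 s (Finsupp.single x 1) =
          if h : ∀ t, v.1 (x t).1 ≠ py then
            Finsupp.single (fun t => (⟨v.1 (x t).1, h t⟩ : {y : Y // y ≠ py})) 1
          else 0 := by
  haveI : Fintype {a : X // a ≠ px} := Fintype.ofFinite _
  have hbij : Function.Bijective (epsilonMap R X Y px py) :=
    ⟨epsilonMap_injective, epsilonMap_surjective⟩
  refine ⟨LinearEquiv.ofBijective (epsilonMap R X Y px py)
    hbij, ?_⟩
  intro v s x
  rw [LinearEquiv.ofBijective_apply, epsilonMap_single]
  exact epsT_eval v x
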